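/- Let R be a commutative ring and n ≥ 2. The following are equivalent: (1) the matrix ring Mₙ(R) is strongly clean, i.e., every element of Mₙ(R) is strongly clean; (2) every monic polynomial h ∈ R[t] of degree n has a gSRC-factorization. -/

import Mathlib

/-- An element of a ring is *strongly clean* if it is the sum of an idempotent and a unit
that commute with each other. -/
def IsStronglyClean {S : Type*} [Ring S] (a : S) : Prop :=
  ∃ e u : S, IsIdempotentElem e ∧ IsUnit u ∧ a = e + u ∧ e * u = u * e

/-- An SR-factorization of a monic polynomial `f` is a factorization `f = f₀ * f₁` into monic
polynomials with `f₀(0)` and `f₁(1)` units. -/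
def HasSRFactorization {R : Type*} [CommRing R] (f : Polynomial R) : Prop :=
  ∃ f₀ f₁ : Polynomial R, f₀.Monic ∧ f₁.Monic ∧ f = f₀ * f₁ ∧
    IsUnit (f₀.eval 0) ∧ IsUnit (f₁.eval 1)

/-- An SRC-factorization is an SR-factorization `f = f₀ * f₁` in which moreover the ideal
`(f₀, f₁)` is all of `R[t]`, i.e. `f₀ * u + f₁ * v = 1` for some `u, v`. -/
def HasSRCFactorization {R : Type*} [CommRing R] (f : Polynomial R) : Prop :=
  ∃ f₀ f₁ : Polynomial R, f₀.Monic ∧ f₁.Monic ∧ f = f₀ * f₁ ∧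
    IsUnit (f₀.eval 0) ∧ IsUnit (f₁.eval 1) ∧ ∃ u v : Polynomial R, f₀ * u + f₁ * v = 1

/-- A complete orthogonal set of idempotents: finitely many idempotents, pairwise orthogonal,
summing to `1`. -/
def IsCompleteOrthogonalIdempotents {R : Type*} [CommRing R] {k : ℕ} (e : Fin k → R) : Prop :=
  (∀ i, IsIdempotentElem (e i)) ∧ (∀ i j, i ≠ j → e i * e j = 0) ∧ ∑ i, e i = 1

/-- A monic `h ∈ R[t]` has a gSRC-factorization if there is a complete orthogonal set of
idempotents `e₁, …, e_k` such that the image of `h` in `(R/(1-eᵢ))[t]` has an SRC-factorization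
for each `i`. -/
def HasGSRCFactorization {R : Type*} [CommRing R] (h : Polynomial R) : Prop :=
  ∃ (k : ℕ) (e : Fin k → R), IsCompleteOrthogonalIdempotents e ∧
    ∀ i, HasSRCFactorization (h.map (Ideal.Quotient.mk (Ideal.span {1 - e i})))


open Polynomial Matrix

namespace SCP

variable {R : Type*} [CommRing R] {T : Type*} [CommRing T]

/-- companion matrix of a monic polynomial (formula-level). -/
def comp (n : ℕ) (h : R[X]) : Matrix (Fin n) (Fin n) R :=
  Matrix.of fun i j => (if (i : ℕ) = (j : ℕ) + 1 then 1 else 0) +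
    (if (j : ℕ) + 1 = n then -h.coeff (i : ℕ) else 0)

lemma comp_map (n : ℕ) (h : R[X]) (π : R →+* T) :
    (comp n h).map π = comp n (h.map π) := by
  ext i j
  simp [comp, Matrix.map_apply, apply_ite π, coeff_map]

lemma comp_mulVec_lt {n : ℕ} (h : R[X]) (j : Fin n) (hj : (j : ℕ) + 1 < n) :
    comp n h *ᵥ Pi.single j 1 = Pi.single (⟨(j : ℕ) + 1, hj⟩ : Fin n) 1 := by
  funext i
  rw [Matrix.mulVec_single_one, Matrix.col_apply]
  simp only [comp, Matrix.of_apply, mul_one, Pi.single_apply]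
  rw [if_neg (by omega : ¬ ((j : ℕ) + 1 = n)), add_zero]
  have : (i : ℕ) = (j : ℕ) + 1 ↔ i = (⟨(j : ℕ) + 1, hj⟩ : Fin n) := by
    rw [Fin.ext_iff]
  simp [this]

lemma comp_mulVec_last {n : ℕ} (h : R[X]) (j : Fin n) (hj : (j : ℕ) + 1 = n) :
    comp n h *ᵥ Pi.single j 1 = fun i : Fin n => -h.coeff (i : ℕ) := by
  funext i
  rw [Matrix.mulVec_single_one, Matrix.col_apply]
  simp only [comp, Matrix.of_apply, mul_one]
  rw [if_pos hj, if_neg (by omega : ¬ ((i : ℕ) = (j : ℕ) + 1))]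
  ring

lemma comp_pow_mulVec {n : ℕ} (h : R[X]) (hn : 0 < n) (k : ℕ) (hk : k < n) :
    (comp n h) ^ k *ᵥ Pi.single (⟨0, hn⟩ : Fin n) 1 = Pi.single (⟨k, hk⟩ : Fin n) 1 := by
  induction k with
  | zero => rw [pow_zero, Matrix.one_mulVec]
  | succ m ih =>
    have hm : m < n := by omega
    rw [pow_succ', ← Matrix.mulVec_mulVec, ih hm]
    exact comp_mulVec_lt h ⟨m, hm⟩ hk

lemma sum_mulVec {n : ℕ} {ι : Type*} (s : Finset ι) (f : ι → Matrix (Fin n) (Fin n) R)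
    (v : Fin n → R) : (∑ k ∈ s, f k) *ᵥ v = ∑ k ∈ s, (f k *ᵥ v) := by
  funext i
  rw [Finset.sum_apply]
  simp only [Matrix.mulVec, dotProduct, Finset.sum_apply, Finset.sum_mul]
  rw [Finset.sum_comm]
  congr 1
  funext y
  rw [Matrix.sum_apply]
  rw [Finset.sum_mul]

lemma phi_eq {n : ℕ} (h : R[X]) (hn : 0 < n) (p : R[X]) (hp : p.natDegree < n) :
    (aeval (comp n h) p) *ᵥ Pi.single (⟨0, hn⟩ : Fin n) 1
      = fun i : Fin n => p.coeff (i : ℕ) := by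
  rw [aeval_eq_sum_range' hp, sum_mulVec]
  funext i
  rw [Finset.sum_apply]
  have key : ∀ k ∈ Finset.range n, ((p.coeff k • (comp n h) ^ k) *ᵥ
      Pi.single (⟨0, hn⟩ : Fin n) 1) i
      = (if (i : ℕ) = k then p.coeff k else 0) := by
    intro k hk
    rw [Finset.mem_range] at hk
    rw [Matrix.smul_mulVec, comp_pow_mulVec h hn k hk]
    simp only [Pi.smul_apply, Pi.single_apply, smul_eq_mul, Fin.ext_iff]
    split <;> simp
  rw [Finset.sum_congr rfl key]
  simp only [Finset.sum_ite_eq (Finset.range n) ((i : ℕ)) (fun k => p.coeff k)]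
  simp [i.isLt]


section CompanionLemmas
variable {n : ℕ} {h : R[X]}

lemma sub_pow_natDegree_lt (hm : h.Monic) (hd : h.natDegree = n) (hn : 0 < n) :
    (h - X ^ n).natDegree < n := by
  have h1 : (h - X ^ n).natDegree ≤ n - 1 := by
    rw [Polynomial.natDegree_le_iff_coeff_eq_zero]
    intro k hk
    have hkn : n ≤ k := by omega
    rw [Polynomial.coeff_sub, Polynomial.coeff_X_pow]
    by_cases hk2 : k = n
    · subst hk2
      rw [if_pos rfl]
      have h1 : h.coeff k = 1 := by
        have h2 := hm.coeff_natDegree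
        rwa [hd] at h2
      rw [h1, sub_self]
    · rw [if_neg (by omega),
        Polynomial.coeff_eq_zero_of_natDegree_lt (by omega : h.natDegree < k), sub_zero]
  omega

lemma aeval_comp_self (hm : h.Monic) (hd : h.natDegree = n) (hn : 0 < n) :
    aeval (comp n h) h = 0 := by
  set C := comp n h with hC
  -- first: kill the cyclic vector
  have hphi : (aeval C h) *ᵥ Pi.single (⟨0, hn⟩ : Fin n) 1 = 0 := by
    have hsplit : h = (h - X ^ n) + X ^ n := by ring
    rw [hsplit, map_add, Matrix.add_mulVec,
      phi_eq h hn _ (sub_pow_natDegree_lt hm hd hn)]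
    have hXn : (aeval C (X ^ n : R[X])) *ᵥ Pi.single (⟨0, hn⟩ : Fin n) 1
        = fun i : Fin n => -h.coeff (i : ℕ) := by
      have hn1 : n - 1 < n := by omega
      have : (X : R[X]) ^ n = X ^ (n - 1) * X := by
        rw [← pow_succ]; congr 1; omega
      rw [map_pow, aeval_X]
      have : C ^ n = C * C ^ (n - 1) := by
        rw [← pow_succ']; congr 1; omega
      rw [this, ← Matrix.mulVec_mulVec, comp_pow_mulVec h hn (n-1) hn1]
      exact comp_mulVec_last h ⟨n - 1, hn1⟩ (by simp; omega)
    rw [hXn]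
    funext i
    simp only [Pi.add_apply, Pi.zero_apply]
    have : (h - X ^ n).coeff (i : ℕ) = h.coeff (i : ℕ) := by
      rw [Polynomial.coeff_sub, Polynomial.coeff_X_pow, if_neg (by omega : ¬ ((i:ℕ) = n)),
        sub_zero]
    rw [this]; ring
  -- commute with powers
  have hcomm : ∀ k : ℕ, aeval C h * C ^ k = C ^ k * aeval C h := by
    intro k
    have : C ^ k = aeval C (X ^ k : R[X]) := by rw [map_pow, aeval_X]
    rw [this, ← _root_.map_mul, ← _root_.map_mul, mul_comm]
  ext i j
  have hcol : (aeval C h) *ᵥ Pi.single j 1 = 0 := by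
    have hj := j.isLt
    have : Pi.single j (1:R) = C ^ (j : ℕ) *ᵥ Pi.single (⟨0, hn⟩ : Fin n) 1 := by
      rw [comp_pow_mulVec h hn (j : ℕ) hj]
    rw [this, Matrix.mulVec_mulVec, hcomm, ← Matrix.mulVec_mulVec, hphi,
      Matrix.mulVec_zero]
  have h3 := congrFun hcol i
  rw [Matrix.mulVec_single] at h3
  simpa using h3

lemma aeval_comp_eq_zero_iff [Nontrivial R] (hm : h.Monic) (hd : h.natDegree = n) (hn : 0 < n)
    (p : R[X]) : aeval (comp n h) p = 0 ↔ h ∣ p := by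
  constructor
  · intro hp
    rw [← Polynomial.modByMonic_eq_zero_iff_dvd hm]
    have hsplit := Polynomial.modByMonic_add_div p h
    have hr : aeval (comp n h) (p %ₘ h) = 0 := by
      have h4 : p %ₘ h = p - h * (p /ₘ h) := eq_sub_iff_add_eq.mpr hsplit
      rw [h4, map_sub, _root_.map_mul, aeval_comp_self hm hd hn, hp, zero_mul, sub_zero]
    have hdeg : (p %ₘ h).natDegree < n := by
      have h5 := Polynomial.natDegree_modByMonic_lt p hm (by
        intro h1; rw [h1] at hd; simp at hd; omega)
      omega
    have := phi_eq h hn _ hdeg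
    rw [hr, Matrix.zero_mulVec] at this
    ext k
    by_cases hk : k < n
    · have := congrFun this.symm ⟨k, hk⟩
      simpa using this
    · rw [Polynomial.coeff_eq_zero_of_natDegree_lt (by omega), Polynomial.coeff_zero]
  · rintro ⟨q, rfl⟩
    rw [_root_.map_mul, aeval_comp_self hm hd hn, zero_mul]

lemma charpoly_comp [Nontrivial R] (hm : h.Monic) (hd : h.natDegree = n) (hn : 0 < n) :
    (comp n h).charpoly = h := by
  have hdvd : h ∣ (comp n h).charpoly := by
    rw [← aeval_comp_eq_zero_iff hm hd hn]
    exact (comp n h).aeval_self_charpoly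
  obtain ⟨q, hq⟩ := hdvd
  have hmono := (comp n h).charpoly_monic
  have hq1 : q.Monic := hm.of_mul_monic_left (hq ▸ hmono)
  have hdeg : (comp n h).charpoly.natDegree = n := by
    rw [Matrix.charpoly_natDegree_eq_dim, Fintype.card_fin]
  have : q.natDegree = 0 := by
    have := hm.natDegree_mul hq1
    rw [← hq, hdeg, hd] at this
    omega
  rw [hq, hq1.natDegree_eq_zero.mp this, mul_one]

lemma comp_centralizer (hm : h.Monic) (hd : h.natDegree = n) (hn : 0 < n)
    (B : Matrix (Fin n) (Fin n) R) (hB : B * comp n h = comp n h * B) :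
    ∃ p : R[X], B = aeval (comp n h) p := by
  set C := comp n h with hC
  set w : Fin n → R := B *ᵥ Pi.single (⟨0, hn⟩ : Fin n) 1 with hw
  set p : R[X] := ∑ k : Fin n, Polynomial.C (w k) * X ^ (k : ℕ) with hp
  have hpc : ∀ i : Fin n, p.coeff (i : ℕ) = w i := by
    intro i
    rw [hp, Polynomial.finset_sum_coeff]
    have : ∀ k : Fin n, (Polynomial.C (w k) * X ^ (k : ℕ)).coeff (i : ℕ)
        = if k = i then w k else 0 := by
      intro k
      rw [Polynomial.coeff_C_mul, Polynomial.coeff_X_pow]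
      by_cases hk : k = i
      · subst hk; simp
      · rw [if_neg (by simpa [Fin.ext_iff, eq_comm] using hk), if_neg hk, mul_zero]
    rw [Finset.sum_congr rfl (fun k _ => this k), Finset.sum_ite_eq' Finset.univ i w,
      if_pos (Finset.mem_univ i)]
  have hpd : p.natDegree < n := by
    have h6 : p.natDegree ≤ n - 1 := Polynomial.natDegree_sum_le_of_forall_le _ _ (by
      intro k _
      exact le_trans (Polynomial.natDegree_C_mul_X_pow_le (w k) (k : ℕ)) (by omega))
    omega
  refine ⟨p, ?_⟩
  have hcomm : ∀ k : ℕ, B * C ^ k = C ^ k * B := fun k => (Commute.pow_right hB k)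
  have hcol0 : (aeval C p) *ᵥ Pi.single (⟨0, hn⟩ : Fin n) 1 = w := by
    rw [phi_eq h hn p hpd]
    funext i
    rw [hpc i]
  ext i j
  have hj := j.isLt
  have hsingle : Pi.single j (1:R) = C ^ (j : ℕ) *ᵥ Pi.single (⟨0, hn⟩ : Fin n) 1 := by
    rw [comp_pow_mulVec h hn (j : ℕ) hj]
  have haec : (aeval C p) * C ^ (j:ℕ) = C ^ (j:ℕ) * (aeval C p) := by
    have : C ^ (j:ℕ) = aeval C (X ^ (j:ℕ) : R[X]) := by rw [map_pow, aeval_X]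
    rw [this, ← _root_.map_mul, ← _root_.map_mul, mul_comm]
  have hcols : B *ᵥ Pi.single j 1 = (aeval C p) *ᵥ Pi.single j 1 := by
    rw [hsingle, Matrix.mulVec_mulVec, Matrix.mulVec_mulVec, hcomm, haec,
      ← Matrix.mulVec_mulVec, ← Matrix.mulVec_mulVec, hcol0]
  have h7 := congrFun hcols i
  rw [Matrix.mulVec_single, Matrix.mulVec_single] at h7
  simpa using h7


end CompanionLemmas

variable {n : ℕ}

/-- `det (X • E + (1 - E))` for an idempotent `E`. -/
noncomputable def dpoly (E : Matrix (Fin n) (Fin n) R) : R[X] :=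
  Matrix.det ((X : R[X]) • E.map (Polynomial.C : R → R[X]) +
    ((1 : Matrix (Fin n) (Fin n) R[X]) - E.map (Polynomial.C : R → R[X])))

lemma idem_aux {A : Type*} [CommRing A] (e : Matrix (Fin n) (Fin n) A) (he : e * e = e)
    (a b : A) : (a • e + (1 - e)) * (b • e + (1 - e)) = (a * b) • e + (1 - e) := by
  have h1 : (1 - e) * (1 - e) = 1 - e := by
    rw [sub_mul, one_mul, mul_sub, mul_one, he, sub_self, sub_zero]
  have h2 : e * (1 - e) = 0 := by
    rw [mul_sub, mul_one, he, sub_self]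
  have h3 : (1 - e) * e = 0 := by
    rw [sub_mul, one_mul, he, sub_self]
  rw [add_mul, mul_add, mul_add, smul_mul_assoc, mul_smul_comm, smul_smul,
    smul_mul_assoc, h2, smul_zero, mul_smul_comm, h3, smul_zero, h1, he]
  rw [add_zero, zero_add]

lemma map_idem {A B : Type*} [CommRing A] [CommRing B] (π : A →+* B)
    {e : Matrix (Fin n) (Fin n) A} (he : e * e = e) :
    e.map π * e.map π = e.map π := by
  rw [← Matrix.map_mul, he]

lemma dmat_map {A : Type*} [CommRing A] (E : Matrix (Fin n) (Fin n) R) (σ : R[X] →+* A) :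
    ((X : R[X]) • E.map (Polynomial.C : R → R[X]) +
      ((1 : Matrix (Fin n) (Fin n) R[X]) - E.map (Polynomial.C : R → R[X]))).map σ
    = σ X • E.map (σ.comp (Polynomial.C : R →+* R[X])) +
      ((1 : Matrix (Fin n) (Fin n) A) - E.map (σ.comp (Polynomial.C : R →+* R[X]))) := by
  ext i j
  simp only [Matrix.map_apply, Matrix.add_apply, Matrix.sub_apply, Matrix.smul_apply,
    Matrix.one_apply, smul_eq_mul, RingHom.coe_comp, Function.comp_apply]
  rw [_root_.map_add, _root_.map_mul, _root_.map_sub]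
  congr 1
  split <;> simp

lemma dpoly_hom {A : Type*} [CommRing A] (E : Matrix (Fin n) (Fin n) R) (σ : R[X] →+* A) :
    σ (dpoly E) = Matrix.det (σ X • E.map (σ.comp (Polynomial.C : R →+* R[X])) +
      ((1 : Matrix (Fin n) (Fin n) A) - E.map (σ.comp (Polynomial.C : R →+* R[X])))) := by
  rw [dpoly, RingHom.map_det, RingHom.mapMatrix_apply, dmat_map]

lemma dpoly_map (π : R →+* T) (E : Matrix (Fin n) (Fin n) R) :
    (dpoly E).map π = dpoly (E.map π) := by
  rw [← Polynomial.coe_mapRingHom, dpoly_hom]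
  have h1 : (Polynomial.mapRingHom π) X = X := by simp
  have h2 : E.map ⇑((Polynomial.mapRingHom π).comp (Polynomial.C : R →+* R[X]))
      = (E.map π).map Polynomial.C := by
    ext i j
    simp [Matrix.map_apply]
  rw [h1, h2, dpoly]

lemma dpoly_orth {E : Matrix (Fin n) (Fin n) R} (hE : E * E = E) (r s : ℕ) :
    (dpoly E).coeff r * (dpoly E).coeff s = if s = r then (dpoly E).coeff r else 0 := by
  classical
  set d := dpoly E with hd
  set σ₁ : R[X] →+* Polynomial R[X] := Polynomial.mapRingHom (Polynomial.C) with hσ₁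
  set σ₂ : R[X] →+* Polynomial R[X] := Polynomial.C with hσ₂
  set σ₃ : R[X] →+* Polynomial R[X] :=
    Polynomial.eval₂RingHom ((Polynomial.C : R[X] →+* Polynomial R[X]).comp
      (Polynomial.C : R →+* R[X])) (Polynomial.C Polynomial.X * Polynomial.X) with hσ₃
  have hc1 : σ₁.comp (Polynomial.C : R →+* R[X]) =
      (Polynomial.C : R[X] →+* Polynomial R[X]).comp (Polynomial.C : R →+* R[X]) := by
    ext x; simp [hσ₁]
  have hc2 : σ₂.comp (Polynomial.C : R →+* R[X]) =
      (Polynomial.C : R[X] →+* Polynomial R[X]).comp (Polynomial.C : R →+* R[X]) := rfl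
  have hc3 : σ₃.comp (Polynomial.C : R →+* R[X]) =
      (Polynomial.C : R[X] →+* Polynomial R[X]).comp (Polynomial.C : R →+* R[X]) := by
    ext x; simp [hσ₃]
  have hkey : σ₁ d * σ₂ d = σ₃ d := by
    have e1 : σ₁ X = Polynomial.X := by simp [hσ₁]
    have e2 : σ₂ X = Polynomial.C Polynomial.X := rfl
    have e3 : σ₃ X = Polynomial.C Polynomial.X * Polynomial.X := by
      rw [hσ₃]; exact Polynomial.eval₂_X _ _
    rw [hd, dpoly_hom, dpoly_hom, dpoly_hom, hc1, hc2, hc3, ← Matrix.det_mul,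
      idem_aux _ (map_idem _ hE), e1, e2, e3, mul_comm]
  have hL : ((σ₁ d * σ₂ d).coeff r).coeff s = d.coeff r * d.coeff s := by
    rw [hσ₂, hσ₁]
    show (((d.map Polynomial.C) * Polynomial.C d).coeff r).coeff s = _
    rw [Polynomial.coeff_mul_C, Polynomial.coeff_map, Polynomial.coeff_C_mul]
  have hR : ((σ₃ d).coeff r).coeff s = if s = r then d.coeff r else 0 := by
    have hexp : σ₃ d = ∑ k ∈ Finset.range (d.natDegree + 1),
        Polynomial.C (Polynomial.C (d.coeff k) * X ^ k) * Polynomial.X ^ k := by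
      rw [hσ₃]
      show Polynomial.eval₂ _ _ d = _
      rw [Polynomial.eval₂_eq_sum_range]
      refine Finset.sum_congr rfl fun k _ => ?_
      rw [mul_pow, ← Polynomial.C_pow, _root_.map_mul, RingHom.coe_comp, Function.comp_apply]
      ring
    rw [hexp, Polynomial.finset_sum_coeff]
    have hterm : ∀ k ∈ Finset.range (d.natDegree + 1),
        (Polynomial.C (Polynomial.C (d.coeff k) * X ^ k) * Polynomial.X ^ k).coeff r
        = if r = k then Polynomial.C (d.coeff k) * X ^ k else 0 := by
      intro k _
      rw [Polynomial.coeff_C_mul_X_pow]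
    rw [Finset.sum_congr rfl hterm, Finset.sum_ite_eq (Finset.range (d.natDegree + 1)) r]
    by_cases hr : r ∈ Finset.range (d.natDegree + 1)
    · rw [if_pos hr, Polynomial.coeff_C_mul, Polynomial.coeff_X_pow, mul_ite, mul_one, mul_zero]
    · rw [if_neg hr, Polynomial.coeff_zero]
      rw [Finset.mem_range] at hr
      have : d.coeff r = 0 := Polynomial.coeff_eq_zero_of_natDegree_lt (by omega)
      rw [this]
      simp
  rw [← hL, hkey, hR]

lemma dpoly_natDegree_le (E : Matrix (Fin n) (Fin n) R) : (dpoly E).natDegree ≤ n := by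
  rw [dpoly, Matrix.det_apply']
  refine le_trans (Polynomial.natDegree_sum_le_of_forall_le _ _ fun σ _ => ?_) le_rfl
  refine le_trans (Polynomial.natDegree_mul_le) ?_
  rw [Polynomial.natDegree_intCast, zero_add]
  refine le_trans (Polynomial.natDegree_prod_le _ _) ?_
  have : ∀ i : Fin n, (((X : R[X]) • E.map (Polynomial.C : R → R[X]) +
      ((1 : Matrix (Fin n) (Fin n) R[X]) - E.map (Polynomial.C : R → R[X]))) (σ i) i).natDegree
      ≤ 1 := by
    intro i
    simp only [Matrix.add_apply, Matrix.smul_apply, Matrix.sub_apply, Matrix.one_apply,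
      Matrix.map_apply, smul_eq_mul]
    refine le_trans (Polynomial.natDegree_add_le _ _) ?_
    simp only [max_le_iff]
    constructor
    · refine le_trans Polynomial.natDegree_mul_le ?_
      simp [Polynomial.natDegree_X_le]
    · refine le_trans (Polynomial.natDegree_sub_le _ _) ?_
      simp only [max_le_iff, Polynomial.natDegree_C]
      constructor
      · split <;> simp
      · omega
  refine le_trans (Finset.sum_le_sum fun i _ => this i) ?_
  simp

lemma dpoly_eval_one {E : Matrix (Fin n) (Fin n) R} : (dpoly E).eval 1 = 1 := by
  have : (Polynomial.evalRingHom (1 : R)) (dpoly E) = 1 := by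
    rw [dpoly_hom]
    have h2 : E.map ⇑((Polynomial.evalRingHom (1:R)).comp (Polynomial.C : R →+* R[X])) = E := by
      ext i j; simp [Matrix.map_apply]
    rw [h2]
    simp
  simpa using this

lemma dpoly_compl {E : Matrix (Fin n) (Fin n) R} (hE : E * E = E) :
    dpoly E * dpoly (1 - E) = X ^ n := by
  have h1 : (1 - E).map (Polynomial.C : R → R[X]) = 1 - E.map Polynomial.C := by
    ext i j
    simp only [Matrix.map_apply, Matrix.sub_apply, Matrix.one_apply]
    rw [map_sub]
    congr 1
    split <;> simp
  rw [dpoly, dpoly, h1, ← Matrix.det_mul]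
  set e := E.map (Polynomial.C : R → R[X]) with he'
  have he : e * e = e := map_idem _ hE
  have h2 : ((X : R[X]) • e + (1 - e)) * ((X:R[X]) • (1 - e) + (1 - (1 - e)))
      = (X : R[X]) • (1 : Matrix (Fin n) (Fin n) R[X]) := by
    have hee : e * (1 - e) = 0 := by rw [mul_sub, mul_one, he, sub_self]
    have hee' : (1 - e) * e = 0 := by rw [sub_mul, one_mul, he, sub_self]
    have h11 : (1 - e) * (1 - e) = 1 - e := by
      rw [sub_mul, one_mul, mul_sub, mul_one, he, sub_self, sub_zero]
    rw [sub_sub_cancel]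
    simp only [add_mul, mul_add, smul_mul_assoc, mul_smul_comm, smul_smul, hee, hee', he,
      h11, smul_zero, zero_add, add_zero]
    rw [← smul_add]
    congr 1
    abel
  rw [h2, Matrix.det_smul, Matrix.det_one, mul_one, Fintype.card_fin]


section generic
variable {A : Type*} [CommRing A]

lemma cross (g e : Matrix (Fin n) (Fin n) A) (he : e * e = e) (p : A) :
    (g * e + (1 - e)) * (e + p • (1 - e)) = g * e + p • (1 - e) := by
  have h2 : e * (1 - e) = 0 := by rw [mul_sub, mul_one, he, sub_self]
  have h3 : (1 - e) * e = 0 := by rw [sub_mul, one_mul, he, sub_self]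
  have h11 : (1 - e) * (1 - e) = 1 - e := by
    rw [sub_mul, one_mul, mul_sub, mul_one, he, sub_self, sub_zero]
  rw [add_mul, mul_add, mul_add, mul_assoc, he, mul_smul_comm, mul_assoc, h2, mul_zero,
    smul_zero, h3, mul_smul_comm, h11]
  rw [add_zero, zero_add]

lemma factor (g e : Matrix (Fin n) (Fin n) A) (he : e * e = e) (hc : g * e = e * g) :
    (g * (1 - e) + e) * (g * e + (1 - e)) = g := by
  have h2 : e * (1 - e) = 0 := by rw [mul_sub, mul_one, he, sub_self]
  have h3 : (1 - e) * e = 0 := by rw [sub_mul, one_mul, he, sub_self]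
  have h11 : (1 - e) * (1 - e) = 1 - e := by
    rw [sub_mul, one_mul, mul_sub, mul_one, he, sub_self, sub_zero]
  have hc1 : g * (1 - e) = (1 - e) * g := by
    rw [mul_sub, mul_one, sub_mul, one_mul, hc]
  rw [add_mul, mul_add, mul_add]
  have t1 : g * (1 - e) * (g * e) = 0 := by
    rw [mul_assoc, hc, ← mul_assoc (1-e) e g, h3, zero_mul, mul_zero]
  have t2 : g * (1 - e) * (1 - e) = g * (1 - e) := by rw [mul_assoc, h11]
  have t3 : e * (g * e) = g * e := by rw [← mul_assoc, ← hc, mul_assoc, he]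
  rw [t1, t2, t3, h2, zero_add, add_zero, ← mul_add, sub_add_cancel, mul_one]

lemma comm_kill {T Q : Type*} [CommRing T] [CommRing Q] [Algebra T Q]
    (g : Polynomial T) (k : ℕ) (x ψ b c v ω : Q)
    (h1 : ψ * b = x * b) (h2 : (ψ - c) * b = v * b) (h3 : v * ω = 1)
    (h4 : Polynomial.aeval ψ g * (ψ - c) ^ k = 0) :
    Polynomial.aeval x g * b = 0 := by
  have hpow : ∀ j : ℕ, ψ ^ j * b = x ^ j * b := by
    intro j; induction j with
    | zero => simp
    | succ m ih =>
      calc ψ ^ (m+1) * b = ψ ^ m * (ψ * b) := by ring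
      _ = ψ ^ m * (x * b) := by rw [h1]
      _ = x * (ψ ^ m * b) := by ring
      _ = x * (x ^ m * b) := by rw [ih]
      _ = x ^ (m+1) * b := by ring
  have hpow2 : ∀ j : ℕ, (ψ - c) ^ j * b = v ^ j * b := by
    intro j; induction j with
    | zero => simp
    | succ m ih =>
      calc (ψ - c) ^ (m+1) * b = (ψ - c) ^ m * ((ψ - c) * b) := by ring
      _ = (ψ - c) ^ m * (v * b) := by rw [h2]
      _ = v * ((ψ - c) ^ m * b) := by ring
      _ = v * (v ^ m * b) := by rw [ih]
      _ = v ^ (m+1) * b := by ring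
  have haev : ∀ p : Polynomial T, Polynomial.aeval ψ p * b = Polynomial.aeval x p * b := by
    intro p
    rw [Polynomial.aeval_eq_sum_range (x := ψ), Polynomial.aeval_eq_sum_range (x := x),
      Finset.sum_mul, Finset.sum_mul]
    exact Finset.sum_congr rfl fun j _ => by rw [smul_mul_assoc, smul_mul_assoc, hpow]
  have h4b := congrArg (fun z => z * b) h4
  simp only [zero_mul] at h4b
  have h5 : Polynomial.aeval x g * b * v ^ k = 0 := by
    calc Polynomial.aeval x g * b * v ^ k
        = Polynomial.aeval ψ g * b * v ^ k := by rw [haev]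
      _ = Polynomial.aeval ψ g * (v ^ k * b) := by ring
      _ = Polynomial.aeval ψ g * ((ψ - c) ^ k * b) := by rw [hpow2]
      _ = Polynomial.aeval ψ g * (ψ - c) ^ k * b := by ring
      _ = 0 := h4b
  have h6 := congrArg (fun z => z * ω ^ k) h5
  simp only [zero_mul] at h6
  calc Polynomial.aeval x g * b = Polynomial.aeval x g * b * (v * ω) ^ k := by
        rw [h3, one_pow, mul_one]
    _ = Polynomial.aeval x g * b * v ^ k * ω ^ k := by rw [mul_pow, ← mul_assoc]
    _ = 0 := h6

lemma charm_eq (M : Matrix (Fin n) (Fin n) A) :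
    charmatrix M = (X : A[X]) • (1 : Matrix (Fin n) (Fin n) A[X]) - M.map Polynomial.C := by
  ext i j
  by_cases hij : i = j
  · subst hij
    rw [charmatrix_apply_eq]
    simp [Matrix.smul_apply, Matrix.one_apply, Matrix.map_apply]
  · rw [charmatrix_apply_ne _ _ _ hij]
    simp [Matrix.sub_apply, Matrix.smul_apply, Matrix.one_apply_ne hij, Matrix.map_apply]

lemma charm_eval (M : Matrix (Fin n) (Fin n) A) (a : A) :
    (charmatrix M).map (Polynomial.evalRingHom a) = a • 1 - M := by
  rw [charm_eq]
  ext i j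
  simp only [Matrix.map_apply, Matrix.sub_apply, Matrix.smul_apply, Matrix.one_apply,
    smul_eq_mul]
  rw [_root_.map_sub]
  simp [apply_ite (Polynomial.evalRingHom a)]

lemma map_comb1 {B : Type*} [CommRing B] (f : A →+* B) (M N : Matrix (Fin n) (Fin n) A) :
    (M * N + (1 - N)).map f = M.map f * N.map f + (1 - N.map f) := by
  rw [← RingHom.mapMatrix_apply, _root_.map_add, _root_.map_mul, _root_.map_sub,
    _root_.map_one, RingHom.mapMatrix_apply, RingHom.mapMatrix_apply]

lemma map_comb0 {B : Type*} [CommRing B] (f : A →+* B) (M N : Matrix (Fin n) (Fin n) A) :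
    (M * (1 - N) + N).map f = M.map f * (1 - N.map f) + N.map f := by
  rw [← RingHom.mapMatrix_apply, _root_.map_add, _root_.map_mul, _root_.map_sub,
    _root_.map_one, RingHom.mapMatrix_apply, RingHom.mapMatrix_apply]

end generic

/-- Per-idempotent construction: SRC factorization from a strongly clean
decomposition of the companion matrix, given constant "rank". -/
theorem src_of_clean {T : Type*} [CommRing T] [Nontrivial T] {n r : ℕ} {h : T[X]}
    (hm : h.Monic) (hd : h.natDegree = n) (hn : 0 < n) (ε w : T[X])
    (hE : aeval (comp n h) (ε * ε) = aeval (comp n h) ε)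
    (hUW : (comp n h - aeval (comp n h) ε) * aeval (comp n h) w = 1)
    (hr : r ≤ n) (hdp : dpoly (aeval (comp n h) ε) = X ^ r) :
    HasSRCFactorization h := by
  classical
  set C : Matrix (Fin n) (Fin n) T := comp n h with hC
  set E : Matrix (Fin n) (Fin n) T := aeval C ε with hEdef
  set K : Ideal T[X] := RingHom.ker (aeval C : T[X] →ₐ[T] Matrix (Fin n) (Fin n) T) with hK
  have hKmem : ∀ p : T[X], p ∈ K ↔ aeval C p = 0 := fun p => RingHom.mem_ker
  have z1 : aeval C (ε * ε - ε) = 0 := by rw [map_sub, hE, sub_self]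
  have z2 : aeval C ((X - ε) * w - 1) = 0 := by
    rw [map_sub, _root_.map_mul, map_sub, aeval_X, _root_.map_one, ← hEdef, hUW, sub_self]
  have hK1 : (ε * ε - ε : T[X]) ∈ K := (hKmem _).mpr z1
  have hK2 : ((X - ε) * w - 1 : T[X]) ∈ K := (hKmem _).mpr z2
  have hEE : E * E = E := by rw [hEdef, ← _root_.map_mul, hE]
  have hCE : C * E = E * C := by
    have e1 : C * E = aeval C (X * ε) := by rw [_root_.map_mul, aeval_X, hEdef]
    have e2 : E * C = aeval C (ε * X) := by rw [_root_.map_mul, aeval_X, hEdef]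
    rw [e1, e2, mul_comm]
  set Φ : Matrix (Fin n) (Fin n) T →+* Matrix (Fin n) (Fin n) T[X] :=
    (Polynomial.C : T →+* T[X]).mapMatrix with hΦ
  set e' : Matrix (Fin n) (Fin n) T[X] := Φ E with he'def
  set c' : Matrix (Fin n) (Fin n) T[X] := Φ C with hc'def
  have he' : e' * e' = e' := by rw [he'def, ← _root_.map_mul, hEE]
  have hce : c' * e' = e' * c' := by
    rw [he'def, hc'def, ← _root_.map_mul, ← _root_.map_mul, hCE]
  set cm : Matrix (Fin n) (Fin n) T[X] := charmatrix C with hcm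
  have hcm' : cm = (X : T[X]) • (1 : Matrix (Fin n) (Fin n) T[X]) - c' := by
    rw [hcm, charm_eq, hc'def, hΦ, RingHom.mapMatrix_apply]
  have hcme : cm * e' = e' * cm := by
    rw [hcm', sub_mul, mul_sub, smul_mul_assoc, one_mul, mul_smul_comm, mul_one, hce]
  set f₁ : T[X] := (cm * e' + (1 - e')).det with hf₁
  set f₀ : T[X] := (cm * (1 - e') + e').det with hf₀
  -- (i) product = h
  have hdetcm : cm.det = h := by
    rw [hcm]
    have : (charmatrix C).det = C.charpoly := rfl
    rw [this, charpoly_comp hm hd hn]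
  have hprod : f₀ * f₁ = h := by
    rw [hf₀, hf₁, ← Matrix.det_mul, factor cm e' he' hcme, hdetcm]
  -- the two charpoly identities
  have hψ1map : Φ (C * E + (1 - E)) = c' * e' + (1 - e') := by
    rw [map_add, _root_.map_mul, map_sub, _root_.map_one]
  have hψ0map : Φ (C * (1 - E)) = c' * (1 - e') := by
    rw [_root_.map_mul, map_sub, _root_.map_one]
  have hch1 : f₁ * ((e' + ((X : T[X]) - 1) • (1 - e')).det) = (C * E + (1 - E)).charpoly := by
    rw [hf₁, ← Matrix.det_mul, cross cm e' he' ((X : T[X]) - 1)]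
    have : cm * e' + ((X : T[X]) - 1) • (1 - e')
        = (X : T[X]) • (1 : Matrix (Fin n) (Fin n) T[X]) - (c' * e' + (1 - e')) := by
      rw [hcm', sub_mul, smul_mul_assoc, one_mul]
      module
    rw [this]
    have h2 : charmatrix (C * E + (1 - E))
        = (X : T[X]) • (1 : Matrix (Fin n) (Fin n) T[X]) - (c' * e' + (1 - e')) := by
      rw [charm_eq, ← hψ1map, hΦ, RingHom.mapMatrix_apply]
    rw [Matrix.charpoly, h2]
  have hch0 : f₀ * (((1 - e') + (X : T[X]) • e').det) = (C * (1 - E)).charpoly := by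
    have hcross := cross cm (1 - e')
      (by rw [sub_mul, one_mul, mul_sub, mul_one, he', sub_self, sub_zero]) (X : T[X])
    rw [sub_sub_cancel] at hcross
    rw [hf₀, ← Matrix.det_mul, hcross]
    have : cm * (1 - e') + (X : T[X]) • e'
        = (X : T[X]) • (1 : Matrix (Fin n) (Fin n) T[X]) - c' * (1 - e') := by
      rw [hcm', sub_mul, smul_mul_assoc, one_mul]
      module
    rw [this]
    have h2 : charmatrix (C * (1 - E))
        = (X : T[X]) • (1 : Matrix (Fin n) (Fin n) T[X]) - c' * (1 - e') := by
      rw [charm_eq, ← hψ0map, hΦ, RingHom.mapMatrix_apply]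
    rw [Matrix.charpoly, h2]
  -- values of the two auxiliary determinants
  have hdpE : dpoly E = ((X : T[X]) • e' + (1 - e')).det := by
    rw [dpoly, he'def, hΦ, RingHom.mapMatrix_apply]
  have hd0 : ((1 - e') + (X : T[X]) • e').det = X ^ r := by
    rw [add_comm, ← hdpE, hdp]
  have hd1compl : dpoly (1 - E) = X ^ (n - r) := by
    have hXn : (X : T[X]) ^ r * dpoly (1 - E) = X ^ r * X ^ (n - r) := by
      rw [← pow_add]
      have hrn : r + (n - r) = n := by omega
      rw [hrn, ← dpoly_compl hEE, hdp]
    exact (Polynomial.monic_X_pow (R := T) r).isRegular.left hXn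
  have hd1 : ((e' + ((X : T[X]) - 1) • (1 - e')).det) = ((X : T[X]) - 1) ^ (n - r) := by
    set σ : T[X] →+* T[X] :=
      Polynomial.eval₂RingHom (Polynomial.C : T →+* T[X]) ((X : T[X]) - 1) with hσ
    have hσC : σ.comp (Polynomial.C : T →+* T[X]) = (Polynomial.C : T →+* T[X]) := by
      ext t; simp [hσ]
    have hσX : σ X = (X : T[X]) - 1 := Polynomial.eval₂_X _ _
    have hh := dpoly_hom (1 - E) σ
    rw [hd1compl, hσC, hσX] at hh
    have hms : (1 - E).map (Polynomial.C : T → T[X]) = 1 - e' := by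
      have hh2 : (1 - E).map (Polynomial.C : T → T[X]) = Φ (1 - E) := by
        rw [hΦ, RingHom.mapMatrix_apply]
      rw [hh2, map_sub, _root_.map_one, he'def]
    rw [hms, sub_sub_cancel] at hh
    have hσpow : σ ((X : T[X]) ^ (n - r)) = ((X : T[X]) - 1) ^ (n - r) := by
      rw [map_pow, hσX]
    rw [← hσpow, hh, add_comm]
  -- monicity
  have hmonXp : ((X : T[X]) - 1) ^ (n - r) |>.Monic := by
    have : ((X : T[X]) - 1) = X - Polynomial.C 1 := by rw [_root_.map_one]
    rw [this]
    exact (Polynomial.monic_X_sub_C (1 : T)).pow _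
  have hch1' : f₁ * ((X : T[X]) - 1) ^ (n - r) = (C * E + (1 - E)).charpoly := by
    rw [← hd1, hch1]
  have hch0' : f₀ * (X : T[X]) ^ r = (C * (1 - E)).charpoly := by
    rw [← hd0, hch0]
  have hmono1 : f₁.Monic := by
    apply hmonXp.of_mul_monic_left
    rw [mul_comm, hch1']
    exact Matrix.charpoly_monic _
  have hmono0 : f₀.Monic := by
    apply (Polynomial.monic_X_pow (R := T) r).of_mul_monic_left
    rw [mul_comm, hch0']
    exact Matrix.charpoly_monic _
  -- units
  have hmapev : ∀ (a : T), e'.map (Polynomial.evalRingHom a) = E := by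
    intro a
    rw [he'def, hΦ, RingHom.mapMatrix_apply]
    ext i j
    simp [Matrix.map_apply]
  have hunit1 : IsUnit (f₁.eval 1) := by
    have hev : f₁.eval 1 = (((1 : T) • 1 - C) * E + (1 - E)).det := by
      show (Polynomial.evalRingHom (1 : T)) f₁ = _
      rw [hf₁, RingHom.map_det]
      congr 1
      rw [RingHom.mapMatrix_apply, map_comb1]
      have hΨcm : cm.map (Polynomial.evalRingHom (1:T)) = (1:T) • 1 - C := by
        rw [hcm, charm_eval]
      rw [hΨcm, hmapev 1]
    have hq1 : ((1 : T) • 1 - C) * E + (1 - E) = aeval C ((1 - X) * ε + (1 - ε)) := by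
      rw [map_add, _root_.map_mul, map_sub, map_sub, _root_.map_one, aeval_X,
        one_smul, hEdef]
    have hid : ((1 - X) * ε + (1 - ε)) * ((1 - ε) - w * ε)
        = 1 + (w + X + X * w) * (ε * ε - ε) + ε * ((X - ε) * w - 1) := by ring
    have hmul : aeval C ((1 - X) * ε + (1 - ε)) * aeval C ((1 - ε) - w * ε) = 1 := by
      rw [← _root_.map_mul, hid, map_add, map_add, _root_.map_one, _root_.map_mul,
        _root_.map_mul, z1, z2, mul_zero, mul_zero, add_zero, add_zero]
    rw [hev, hq1]
    exact IsUnit.of_mul_eq_one _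
      (by rw [← Matrix.det_mul, hmul, Matrix.det_one])
  have hunit0 : IsUnit (f₀.eval 0) := by
    have hev : f₀.eval 0 = (((0 : T) • 1 - C) * (1 - E) + E).det := by
      show (Polynomial.evalRingHom (0 : T)) f₀ = _
      rw [hf₀, RingHom.map_det]
      congr 1
      rw [RingHom.mapMatrix_apply, map_comb0]
      have hΨcm : cm.map (Polynomial.evalRingHom (0:T)) = (0:T) • 1 - C := by
        rw [hcm, charm_eval]
      rw [hΨcm, hmapev 0]
    have hq0 : ((0 : T) • 1 - C) * (1 - E) + E = aeval C ((-X) * (1 - ε) + ε) := by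
      rw [map_add, _root_.map_mul, map_sub, map_neg, _root_.map_one, aeval_X,
        zero_smul, zero_sub, hEdef]
    have hid : ((-X) * (1 - ε) + ε) * (ε - w * (1 - ε))
        = 1 + (X + X * w + 1) * (ε * ε - ε) + (1 - ε) * ((X - ε) * w - 1) := by ring
    have hmul : aeval C ((-X) * (1 - ε) + ε) * aeval C (ε - w * (1 - ε)) = 1 := by
      rw [← _root_.map_mul, hid, map_add, map_add, _root_.map_one, _root_.map_mul,
        _root_.map_mul, z1, z2, mul_zero, mul_zero, add_zero, add_zero]
    rw [hev, hq0]
    exact IsUnit.of_mul_eq_one _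
      (by rw [← Matrix.det_mul, hmul, Matrix.det_one])
  -- comaximality via the quotient by K
  set φ : T[X] →ₐ[T] (T[X] ⧸ K) := Ideal.Quotient.mkₐ T K with hφdef
  have hφ0 : ∀ p : T[X], p ∈ K → φ p = 0 := by
    intro p hp
    rw [hφdef, Ideal.Quotient.mkₐ_eq_mk, Ideal.Quotient.eq_zero_iff_mem]
    exact hp
  have hφeq : ∀ a b : T[X], a - b ∈ K → φ a = φ b := by
    intro a b hab
    have := hφ0 _ hab
    rw [map_sub, sub_eq_zero] at this
    exact this
  have hφmem : ∀ p : T[X], φ p = 0 → p ∈ K := by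
    intro p hp
    rw [hφdef, Ideal.Quotient.mkₐ_eq_mk, Ideal.Quotient.eq_zero_iff_mem] at hp
    exact hp
  -- f₁ side
  have hker1 : (f₁ * ε : T[X]) ∈ K := by
    apply hφmem
    have hmain : aeval (φ X) f₁ * φ ε = 0 := by
      apply comm_kill f₁ (n - r) (φ X) (φ (X * ε + 1 - ε)) (φ ε) 1 (φ (X - ε)) (φ w)
      · rw [← _root_.map_mul, ← _root_.map_mul]
        apply hφeq
        have : (X * ε + 1 - ε) * ε - X * ε = (X - 1) * (ε * ε - ε) := by ring
        rw [this]
        exact Ideal.mul_mem_left _ _ hK1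
      · rw [show (φ (X * ε + 1 - ε) - 1) = φ (X * ε + 1 - ε - 1) from
          (by rw [map_sub, _root_.map_one] : φ (X * ε + 1 - ε - 1) = φ (X * ε + 1 - ε) - 1).symm]
        rw [← _root_.map_mul, ← _root_.map_mul]
        apply hφeq
        have : (X * ε + 1 - ε - 1) * ε - (X - ε) * ε = X * (ε * ε - ε) := by ring
        rw [this]
        exact Ideal.mul_mem_left _ _ hK1
      · rw [← _root_.map_mul, show (1 : T[X] ⧸ K) = φ 1 from (_root_.map_one φ).symm]
        apply hφeq
        simpa using hK2
      · have e1 : Polynomial.aeval (φ (X * ε + 1 - ε)) f₁ = φ (Polynomial.aeval (X * ε + 1 - ε) f₁) :=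
          Polynomial.aeval_algHom_apply φ _ _
        have e2 : (φ (X * ε + 1 - ε) - 1) ^ (n - r) = φ ((X * ε + 1 - ε - 1) ^ (n - r)) := by
          symm
          rw [map_pow, _root_.map_sub, _root_.map_one]
        rw [e1, e2, ← _root_.map_mul]
        apply hφ0
        rw [hKmem, _root_.map_mul, map_pow]
        have hv : aeval C (X * ε + 1 - ε) = C * E + (1 - E) := by
          rw [map_sub, map_add, _root_.map_mul, aeval_X, _root_.map_one, hEdef, add_sub_assoc]
        have hv2 : aeval C (X * ε + 1 - ε - 1) = C * E + (1 - E) - 1 := by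
          rw [map_sub, hv, _root_.map_one]
        have haecomp : aeval C (Polynomial.aeval (X * ε + 1 - ε) f₁)
            = Polynomial.aeval (C * E + (1 - E)) f₁ := by
          rw [← Polynomial.comp_eq_aeval, Polynomial.aeval_comp, hv]
        rw [haecomp, hv2]
        have hCH := Matrix.aeval_self_charpoly (C * E + (1 - E))
        rw [← hch1', _root_.map_mul, map_pow, map_sub, aeval_X, _root_.map_one] at hCH
        exact hCH
    have e3 : Polynomial.aeval (φ X) f₁ = φ f₁ := by
      rw [Polynomial.aeval_algHom_apply, Polynomial.aeval_X_left_apply]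
    rw [_root_.map_mul]
    rw [e3] at hmain
    exact hmain
  -- f₀ side
  have hker0 : (f₀ * (1 - ε) : T[X]) ∈ K := by
    apply hφmem
    have hmain : aeval (φ X) f₀ * φ (1 - ε) = 0 := by
      apply comm_kill f₀ r (φ X) (φ (X * (1 - ε))) (φ (1 - ε)) 0 (φ (X - ε)) (φ w)
      · rw [← _root_.map_mul, ← _root_.map_mul]
        apply hφeq
        have : X * (1 - ε) * (1 - ε) - X * (1 - ε) = X * (ε * ε - ε) := by ring
        rw [this]; exact Ideal.mul_mem_left _ _ hK1
      · rw [sub_zero, ← _root_.map_mul, ← _root_.map_mul]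
        apply hφeq
        have : X * (1 - ε) * (1 - ε) - (X - ε) * (1 - ε) = (X - 1) * (ε * ε - ε) := by ring
        rw [this]; exact Ideal.mul_mem_left _ _ hK1
      · rw [← _root_.map_mul, show (1 : T[X] ⧸ K) = φ 1 from (_root_.map_one φ).symm]
        apply hφeq
        simpa using hK2
      · have e1 : Polynomial.aeval (φ (X * (1 - ε))) f₀
            = φ (Polynomial.aeval (X * (1 - ε)) f₀) := Polynomial.aeval_algHom_apply φ _ _
        rw [sub_zero, e1, ← map_pow, ← _root_.map_mul]
        apply hφ0
        rw [hKmem, _root_.map_mul, map_pow]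
        have hv : aeval C (X * (1 - ε)) = C * (1 - E) := by
          rw [_root_.map_mul, aeval_X, map_sub, _root_.map_one, hEdef]
        have haecomp : aeval C (Polynomial.aeval (X * (1 - ε)) f₀)
            = Polynomial.aeval (C * (1 - E)) f₀ := by
          rw [← Polynomial.comp_eq_aeval, Polynomial.aeval_comp, hv]
        rw [haecomp, hv]
        have hCH := Matrix.aeval_self_charpoly (C * (1 - E))
        rw [← hch0', _root_.map_mul, map_pow, aeval_X] at hCH
        exact hCH
    have e3 : Polynomial.aeval (φ X) f₀ = φ f₀ := by
      rw [Polynomial.aeval_algHom_apply, Polynomial.aeval_X_left_apply]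
    rw [_root_.map_mul]
    rw [e3] at hmain
    exact hmain
  -- conclude
  have hdvd1 : h ∣ f₁ * ε := by
    rw [← aeval_comp_eq_zero_iff hm hd hn]
    exact (hKmem _).mp hker1
  have hdvd0 : h ∣ f₀ * (1 - ε) := by
    rw [← aeval_comp_eq_zero_iff hm hd hn]
    exact (hKmem _).mp hker0
  obtain ⟨a₁, ha₁⟩ := hdvd1
  obtain ⟨a₀, ha₀⟩ := hdvd0
  have hε1 : ε = f₀ * a₁ := by
    apply hmono1.isRegular.left
    show f₁ * ε = f₁ * (f₀ * a₁)
    rw [ha₁, ← hprod]; ring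
  have hε0 : 1 - ε = f₁ * a₀ := by
    apply hmono0.isRegular.left
    show f₀ * (1 - ε) = f₀ * (f₁ * a₀)
    rw [ha₀, ← hprod]; ring
  exact ⟨f₀, f₁, hmono0, hmono1, hprod.symm, hunit0, hunit1, a₁, a₀,
    by rw [← hε1, ← hε0]; ring⟩


lemma aeval_matrix_map (π : R →+* T) (M : Matrix (Fin n) (Fin n) R) (p : R[X]) :
    (Polynomial.aeval M p).map π = Polynomial.aeval (M.map π) (p.map π) := by
  have key := Polynomial.hom_eval₂ p (algebraMap R (Matrix (Fin n) (Fin n) R))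
    (π.mapMatrix : Matrix (Fin n) (Fin n) R →+* Matrix (Fin n) (Fin n) T) M
  have hcomp : (π.mapMatrix : Matrix (Fin n) (Fin n) R →+* Matrix (Fin n) (Fin n) T).comp
      (algebraMap R (Matrix (Fin n) (Fin n) R))
      = (algebraMap T (Matrix (Fin n) (Fin n) T)).comp π := by
    refine RingHom.ext fun r => ?_
    ext i j
    simp only [RingHom.coe_comp, Function.comp_apply, RingHom.mapMatrix_apply,
      Matrix.map_apply, Matrix.algebraMap_matrix_apply, apply_ite π, map_zero]
    simp
  rw [Polynomial.aeval_def, ← RingHom.mapMatrix_apply, key, hcomp, Polynomial.aeval_def,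
    ← Polynomial.eval₂_map, RingHom.mapMatrix_apply]

theorem clean_data_of_src (A : Matrix (Fin n) (Fin n) T) (hpoly : T[X])
    (hfz : Polynomial.aeval A hpoly = 0) (hsrc : HasSRCFactorization hpoly) :
    ∃ E U V : Matrix (Fin n) (Fin n) T,
      E * E = E ∧ A = E + U ∧ E * U = U * E ∧ U * V = 1 ∧ V * U = 1 := by
  classical
  obtain ⟨f₀, f₁, m0, m1, hfact, hu0, hu1, u, v, hcom⟩ := hsrc
  rw [hfact] at hfz
  obtain ⟨w₀, hw₀⟩ := hu0
  obtain ⟨w₁, hw₁⟩ := hu1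
  set c₀ : T := f₀.eval 0 with hc₀
  set c₁ : T := f₁.eval 1 with hc₁
  set ic₀ : T := ((w₀⁻¹ : Tˣ) : T) with hic₀
  set ic₁ : T := ((w₁⁻¹ : Tˣ) : T) with hic₁
  obtain ⟨g₀, hg₀⟩ : (X : T[X]) ∣ (f₀ - Polynomial.C c₀) := by
    rw [Polynomial.X_dvd_iff, Polynomial.coeff_sub, Polynomial.coeff_C_zero,
      Polynomial.coeff_zero_eq_eval_zero, hc₀, sub_self]
  obtain ⟨g₁, hg₁⟩ : ((X : T[X]) - Polynomial.C 1) ∣ (f₁ - Polynomial.C c₁) := by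
    rw [Polynomial.dvd_iff_isRoot]
    simp [Polynomial.IsRoot, hc₁]
  set p : T[X] := f₁ * v with hp
  set K : Ideal T[X] := RingHom.ker (aeval A : T[X] →ₐ[T] Matrix (Fin n) (Fin n) T) with hK
  have hKmem : ∀ q : T[X], q ∈ K ↔ aeval A q = 0 := fun q => RingHom.mem_ker
  set φ : T[X] →ₐ[T] (T[X] ⧸ K) := Ideal.Quotient.mkₐ T K with hφdef
  have hφ0 : ∀ q : T[X], q ∈ K → φ q = 0 := by
    intro q hq
    rw [hφdef, Ideal.Quotient.mkₐ_eq_mk, Ideal.Quotient.eq_zero_iff_mem]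
    exact hq
  have hφmemK : ∀ a b : T[X], φ a = φ b → a - b ∈ K := by
    intro a b hab
    have h2 : φ (a - b) = 0 := by rw [map_sub, hab, sub_self]
    rw [hφdef, Ideal.Quotient.mkₐ_eq_mk, Ideal.Quotient.eq_zero_iff_mem] at h2
    exact h2
  have hz : φ (f₀ * f₁) = 0 := hφ0 _ ((hKmem _).mpr hfz)
  -- relations in the quotient
  have a1 : φ p * φ p = φ p := by
    have hid : p - p * p = f₀ * f₁ * (u * v) := by
      rw [hp]; linear_combination (-(f₁*v)) * hcom
    have h2 := congrArg φ hid
    rw [map_sub] at h2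
    rw [show φ (f₀ * f₁ * (u * v)) = 0 by rw [_root_.map_mul, hz, zero_mul]] at h2
    rw [sub_eq_zero] at h2
    calc φ p * φ p = φ (p * p) := (_root_.map_mul φ p p).symm
    _ = φ p := h2.symm
  have a2 : φ f₀ * φ p = 0 := by
    have hid : f₀ * p = f₀ * f₁ * v := by rw [hp]; ring
    rw [← _root_.map_mul, hid, _root_.map_mul, hz, zero_mul]
  have a3 : φ f₁ * (1 - φ p) = 0 := by
    have hid : f₁ * (1 - p) = f₀ * f₁ * u := by rw [hp]; linear_combination (-f₁) * hcom
    have h2 : (1 : T[X] ⧸ K) - φ p = φ (1 - p) := by rw [map_sub, _root_.map_one]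
    rw [h2, ← _root_.map_mul, hid, _root_.map_mul, hz, zero_mul]
  have a4 : φ f₀ = φ X * φ g₀ + φ (Polynomial.C c₀) := by
    have h2 := congrArg φ hg₀
    rw [map_sub, _root_.map_mul, sub_eq_iff_eq_add] at h2
    exact h2
  have a5 : φ f₁ = (φ X - 1) * φ g₁ + φ (Polynomial.C c₁) := by
    have h3 : φ (f₁ - Polynomial.C c₁) = φ ((X - Polynomial.C 1) * g₁) := congrArg φ hg₁
    rw [map_sub] at h3
    rw [_root_.map_mul, map_sub] at h3
    rw [Polynomial.C_1, _root_.map_one] at h3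
    exact sub_eq_iff_eq_add.mp h3
  have a6 : φ (Polynomial.C c₀) * φ (Polynomial.C ic₀) = 1 := by
    rw [← _root_.map_mul, ← Polynomial.C_mul, hic₀, ← hw₀, Units.mul_inv, Polynomial.C_1,
      _root_.map_one]
  have a7 : φ (Polynomial.C c₁) * φ (Polynomial.C ic₁) = 1 := by
    rw [← _root_.map_mul, ← Polynomial.C_mul, hic₁, ← hw₁, Units.mul_inv, Polynomial.C_1,
      _root_.map_one]
  set pV : T[X] := -(Polynomial.C ic₀) * g₀ * p - Polynomial.C ic₁ * g₁ * (1 - p) with hpV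
  have hmain : φ ((X - (1 - p)) * pV) = 1 := by
    rw [hpV]
    simp only [_root_.map_mul, _root_.map_sub, _root_.map_neg, _root_.map_one]
    linear_combination (-(φ (Polynomial.C ic₀) * φ g₀) + φ (Polynomial.C ic₁) * φ g₁) * a1
      + (-(φ (Polynomial.C ic₀))) * a2 + (-(φ (Polynomial.C ic₁))) * a3
      + (φ (Polynomial.C ic₀) * φ p) * a4 + (φ (Polynomial.C ic₁) * (1 - φ p)) * a5
      + (φ p) * a6 + (1 - φ p) * a7
  -- construct the matrices
  refine ⟨aeval A (1 - p), A - aeval A (1 - p), aeval A pV, ?_, ?_, ?_, ?_, ?_⟩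
  · have hidp : (1 - p) * (1 - p) - (1 - p) = p * p - p := by ring
    have hK2 : p * p - p ∈ K := hφmemK _ _ (by rw [_root_.map_mul]; exact a1)
    have h3 : aeval A ((1 - p) * (1 - p) - (1 - p)) = 0 := by
      rw [hidp]; exact (hKmem _).mp hK2
    rw [map_sub, _root_.map_mul, sub_eq_zero] at h3
    exact h3
  · abel
  · have hU' : aeval A (X - (1 - p)) = A - aeval A (1 - p) := by
      rw [map_sub, aeval_X]
    rw [← hU', ← _root_.map_mul, ← _root_.map_mul, mul_comm]
  · have hU' : aeval A (X - (1 - p)) = A - aeval A (1 - p) := by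
      rw [map_sub, aeval_X]
    have hK2 : (X - (1 - p)) * pV - 1 ∈ K := hφmemK _ _ (by rw [hmain, _root_.map_one])
    have h3 := (hKmem _).mp hK2
    rw [map_sub, _root_.map_mul, _root_.map_one, sub_eq_zero] at h3
    rw [← hU', h3]
  · have hU' : aeval A (X - (1 - p)) = A - aeval A (1 - p) := by
      rw [map_sub, aeval_X]
    have hK2 : (X - (1 - p)) * pV - 1 ∈ K := hφmemK _ _ (by rw [hmain, _root_.map_one])
    have h3 := (hKmem _).mp hK2
    rw [map_sub, _root_.map_mul, _root_.map_one, sub_eq_zero] at h3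
    rw [← hU', ← h3, ← _root_.map_mul, ← _root_.map_mul, mul_comm]
-- gluing
lemma glue_zero {k : ℕ} (e : Fin k → R) (hidem : ∀ i, e i * e i = e i)
    (hsum : ∑ i, e i = 1) (x : R)
    (hx : ∀ i, Ideal.Quotient.mk (Ideal.span {1 - e i}) x = 0) : x = 0 := by
  have h1 : ∀ i, e i * x = 0 := by
    intro i
    have h2 := hx i
    rw [Ideal.Quotient.eq_zero_iff_mem, Ideal.mem_span_singleton] at h2
    obtain ⟨y, hy⟩ := h2
    rw [hy, ← mul_assoc, mul_sub, mul_one, hidem, sub_self, zero_mul]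
  calc x = (∑ i, e i) * x := by rw [hsum, one_mul]
    _ = ∑ i, e i * x := Finset.sum_mul _ _ _
    _ = 0 := by simp [h1]

lemma glue_zero_mat {k : ℕ} (e : Fin k → R) (hidem : ∀ i, e i * e i = e i)
    (hsum : ∑ i, e i = 1) (M : Matrix (Fin n) (Fin n) R)
    (hM : ∀ i, M.map (Ideal.Quotient.mk (Ideal.span {1 - e i})) = 0) : M = 0 := by
  ext a b
  refine glue_zero e hidem hsum (M a b) fun i => ?_
  have := congrFun (congrFun (hM i) a) b
  simpa [Matrix.map_apply] using this

lemma map_smul_mat (π : R →+* T) (c : R) (M : Matrix (Fin n) (Fin n) R) :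
    (c • M).map π = π c • M.map π := by
  ext a b
  simp [Matrix.map_apply]

lemma map_sum_mat {k : ℕ} (π : R →+* T) (f : Fin k → Matrix (Fin n) (Fin n) R) :
    (∑ i, f i).map π = ∑ i, (f i).map π := by
  ext a b
  simp [Matrix.map_apply, Matrix.sum_apply]

/-- entrywise lift of a matrix over a quotient -/
noncomputable def liftM (I : Ideal R) (M : Matrix (Fin n) (Fin n) (R ⧸ I)) :
    Matrix (Fin n) (Fin n) R :=
  Matrix.of fun a b => Function.surjInv Ideal.Quotient.mk_surjective (M a b)

lemma liftM_spec (I : Ideal R) (M : Matrix (Fin n) (Fin n) (R ⧸ I)) :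
    (liftM I M).map (Ideal.Quotient.mk I) = M := by
  ext a b
  simp only [Matrix.map_apply, liftM, Matrix.of_apply]
  exact Function.surjInv_eq Ideal.Quotient.mk_surjective (M a b)


-- additional small helpers
lemma map_mul_mat (π : R →+* T) (M N : Matrix (Fin n) (Fin n) R) :
    (M * N).map π = M.map π * N.map π := by
  rw [← RingHom.mapMatrix_apply, _root_.map_mul, RingHom.mapMatrix_apply,
    RingHom.mapMatrix_apply]

lemma map_sub_mat (π : R →+* T) (M N : Matrix (Fin n) (Fin n) R) :
    (M - N).map π = M.map π - N.map π := by
  rw [← RingHom.mapMatrix_apply, _root_.map_sub, RingHom.mapMatrix_apply,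
    RingHom.mapMatrix_apply]

lemma map_add_mat (π : R →+* T) (M N : Matrix (Fin n) (Fin n) R) :
    (M + N).map π = M.map π + N.map π := by
  rw [← RingHom.mapMatrix_apply, _root_.map_add, RingHom.mapMatrix_apply,
    RingHom.mapMatrix_apply]

lemma map_one_mat (π : R →+* T) :
    ((1 : Matrix (Fin n) (Fin n) R)).map π = 1 := by
  rw [← RingHom.mapMatrix_apply, _root_.map_one]

lemma quot_idem_val {k : ℕ} (e : Fin k → R) (hidem : ∀ i, e i * e i = e i)
    (horth : ∀ i j, i ≠ j → e i * e j = 0) (j i : Fin k) :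
    (Ideal.Quotient.mk (Ideal.span {1 - e j})) (e i) = if i = j then 1 else 0 := by
  by_cases hij : i = j
  · subst hij
    rw [if_pos rfl]
    rw [show (1 : R ⧸ Ideal.span {1 - e i}) = Ideal.Quotient.mk _ (1 : R) from rfl]
    rw [Ideal.Quotient.eq]
    exact neg_mem_iff.mp (by
      rw [neg_sub]
      exact Ideal.subset_span rfl)
  · rw [if_neg hij, Ideal.Quotient.eq_zero_iff_mem]
    have h1 : e i = e i * (1 - e j) := by
      rw [mul_sub, mul_one, horth i j hij, sub_zero]
    rw [h1]
    exact Ideal.mul_mem_left _ _ (Ideal.subset_span rfl)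

lemma glue_map {k : ℕ} (e : Fin k → R) (hidem : ∀ i, e i * e i = e i)
    (horth : ∀ i j, i ≠ j → e i * e j = 0)
    (M : ∀ i, Matrix (Fin n) (Fin n) (R ⧸ Ideal.span {1 - e i})) (j : Fin k) :
    ((∑ i, e i • liftM (Ideal.span {1 - e i}) (M i)).map
      (Ideal.Quotient.mk (Ideal.span {1 - e j}))) = M j := by
  rw [map_sum_mat]
  have hterm : ∀ i : Fin k, (e i • liftM (Ideal.span {1 - e i}) (M i)).map
      (Ideal.Quotient.mk (Ideal.span {1 - e j}))
      = if i = j then M j else 0 := by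
    intro i
    rw [map_smul_mat, quot_idem_val e hidem horth j i]
    by_cases hij : i = j
    · subst hij
      rw [if_pos rfl, if_pos rfl, one_smul, liftM_spec]
    · rw [if_neg hij, if_neg hij, zero_smul]
  rw [Finset.sum_congr rfl fun i _ => hterm i, Finset.sum_ite_eq' Finset.univ j]
  rw [if_pos (Finset.mem_univ j)]


end SCP

theorem matrixRing_stronglyClean_iff {R : Type*} [CommRing R] {n : ℕ} (hn : 2 ≤ n) :
    (∀ A : Matrix (Fin n) (Fin n) R, IsStronglyClean A) ↔
      ∀ h : Polynomial R, h.Monic → h.natDegree = n → HasGSRCFactorization h := by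
  classical
  have hn0 : 0 < n := by omega
  constructor
  · -- forward
    intro hsc h hm hd
    set C : Matrix (Fin n) (Fin n) R := SCP.comp n h with hC
    obtain ⟨e0, u0, hid, hu, hsum, hcomm⟩ := hsc C
    have hU : u0 = C - e0 := by rw [hsum]; abel
    have hid' : e0 * e0 = e0 := hid
    have hCe : e0 * C = C * e0 := by
      rw [hsum, mul_add, add_mul, hid', hcomm]
    obtain ⟨ε, hε⟩ := SCP.comp_centralizer hm hd hn0 e0 hCe
    obtain ⟨uu, huu⟩ := hu
    have huC : u0 * C = C * u0 := by
      rw [hsum, mul_add, add_mul, hcomm]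
    have hWC : ((uu⁻¹ : (Matrix (Fin n) (Fin n) R)ˣ) : Matrix (Fin n) (Fin n) R) * C
        = C * ((uu⁻¹ : (Matrix (Fin n) (Fin n) R)ˣ) : Matrix (Fin n) (Fin n) R) := by
      have h2 : Commute ((uu : (Matrix (Fin n) (Fin n) R)ˣ) : Matrix (Fin n) (Fin n) R) C := by
        rw [huu]; exact huC
      exact h2.units_inv_left.eq
    obtain ⟨w, hw⟩ := SCP.comp_centralizer hm hd hn0 _ hWC
    have hE : aeval C (ε * ε) = aeval C ε := by
      rw [_root_.map_mul, ← hε]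
      exact hid'
    have hUW : (C - aeval C ε) * aeval C w = 1 := by
      rw [← hε, ← hw, ← hU, ← huu, Units.mul_inv]
    set d : R[X] := SCP.dpoly e0 with hdd
    refine ⟨n + 1, fun r => d.coeff (r : ℕ), ⟨?_, ?_, ?_⟩, ?_⟩
    · intro i
      have h2 := SCP.dpoly_orth hid' (i : ℕ) (i : ℕ)
      rw [if_pos rfl] at h2
      exact h2
    · intro i j hij
      have h2 := SCP.dpoly_orth hid' (i : ℕ) (j : ℕ)
      rw [if_neg (fun hval => hij (Fin.ext hval.symm))] at h2
      exact h2
    · have hdeg := SCP.dpoly_natDegree_le e0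
      have h2 := Polynomial.eval_eq_sum_range' (n := n + 1) (Nat.lt_succ_of_le hdeg) (1 : R)
      rw [SCP.dpoly_eval_one] at h2
      rw [Fin.sum_univ_eq_sum_range (fun r => d.coeff r) (n + 1)]
      simp only [one_pow, mul_one] at h2
      exact h2.symm
    · intro r
      rcases subsingleton_or_nontrivial (R ⧸ Ideal.span {1 - d.coeff (r : ℕ)}) with hs | hnt
      · exact ⟨1, 1, Polynomial.monic_one, Polynomial.monic_one, Subsingleton.elim _ _,
          by simp, by simp, 1, 0, by ring⟩
      · set π := Ideal.Quotient.mk (Ideal.span {1 - d.coeff (r : ℕ)}) with hπ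
        have hm' : (h.map π).Monic := hm.map π
        have hd' : (h.map π).natDegree = n := by rw [hm.natDegree_map]; exact hd
        have hcmap : SCP.comp n (h.map π) = C.map π := (SCP.comp_map n h π).symm
        have hεmap : aeval (SCP.comp n (h.map π)) (ε.map π) = e0.map π := by
          rw [hcmap, ← SCP.aeval_matrix_map, ← hε]
        have hE' : aeval (SCP.comp n (h.map π)) (ε.map π * ε.map π)
            = aeval (SCP.comp n (h.map π)) (ε.map π) := by
          rw [hcmap, ← Polynomial.map_mul, ← SCP.aeval_matrix_map, ← SCP.aeval_matrix_map, hE]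
        have hUW' : (SCP.comp n (h.map π) - aeval (SCP.comp n (h.map π)) (ε.map π))
            * aeval (SCP.comp n (h.map π)) (w.map π) = 1 := by
          rw [hcmap, ← SCP.aeval_matrix_map, ← SCP.aeval_matrix_map,
            ← SCP.map_sub_mat, ← SCP.map_mul_mat, hUW, SCP.map_one_mat]
        have hr : (r : ℕ) ≤ n := by omega
        have hdp : SCP.dpoly (aeval (SCP.comp n (h.map π)) (ε.map π)) = X ^ (r : ℕ) := by
          rw [hεmap, ← SCP.dpoly_map]
          ext kk
          rw [Polynomial.coeff_map, Polynomial.coeff_X_pow]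
          by_cases hkr : kk = (r : ℕ)
          · rw [hkr, if_pos rfl, ← hdd]
            rw [show (1 : R ⧸ Ideal.span {1 - d.coeff (r : ℕ)}) = π (1 : R) from rfl, hπ,
              Ideal.Quotient.eq]
            exact neg_mem_iff.mp (by rw [neg_sub]; exact Ideal.subset_span rfl)
          · rw [if_neg hkr, ← hdd, hπ, Ideal.Quotient.eq_zero_iff_mem]
            by_cases hkn : kk ≤ n
            · have h3 : d.coeff kk = d.coeff kk * (1 - d.coeff (r : ℕ)) := by
                rw [mul_sub, mul_one]
                have h4 := SCP.dpoly_orth hid' kk (r : ℕ)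
                rw [if_neg (fun hval => hkr hval.symm), ← hdd] at h4
                rw [h4, sub_zero]
              rw [h3]
              exact Ideal.mul_mem_left _ _ (Ideal.subset_span rfl)
            · have h3 : d.coeff kk = 0 := Polynomial.coeff_eq_zero_of_natDegree_lt
                (lt_of_le_of_lt (SCP.dpoly_natDegree_le e0) (by omega))
              rw [h3]
              exact Ideal.zero_mem _
        exact SCP.src_of_clean hm' hd' hn0 (ε.map π) (w.map π) hE' hUW' hr hdp
  · -- backward
    intro hfac A
    rcases subsingleton_or_nontrivial R with hs | hnt
    · exact ⟨0, A, IsIdempotentElem.zero,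
        ⟨⟨A, A, Subsingleton.elim _ _, Subsingleton.elim _ _⟩, rfl⟩,
        (zero_add A).symm, Subsingleton.elim _ _⟩
    · have hmono := A.charpoly_monic
      have hdeg : A.charpoly.natDegree = n := by
        rw [Matrix.charpoly_natDegree_eq_dim, Fintype.card_fin]
      obtain ⟨k, e, ⟨hidem, horth, hsum⟩, hsrc⟩ := hfac A.charpoly hmono hdeg
      have hidem' : ∀ i, e i * e i = e i := hidem
      have hdata : ∀ i : Fin k, ∃ E U V :
          Matrix (Fin n) (Fin n) (R ⧸ Ideal.span {1 - e i}),
          E * E = E ∧ A.map (Ideal.Quotient.mk (Ideal.span {1 - e i})) = E + U ∧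
          E * U = U * E ∧ U * V = 1 ∧ V * U = 1 := by
        intro i
        apply SCP.clean_data_of_src _ (A.charpoly.map (Ideal.Quotient.mk _)) ?_ (hsrc i)
        rw [← SCP.aeval_matrix_map, Matrix.aeval_self_charpoly]
        ext a b
        simp [Matrix.map_apply]
      choose E U V hEi hAi hEUi hUVi hVUi using hdata
      set Eg := ∑ i, e i • SCP.liftM (Ideal.span {1 - e i}) (E i) with hEg
      set Ug := ∑ i, e i • SCP.liftM (Ideal.span {1 - e i}) (U i) with hUg
      set Vg := ∑ i, e i • SCP.liftM (Ideal.span {1 - e i}) (V i) with hVg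
      have hmapE : ∀ j, Eg.map (Ideal.Quotient.mk (Ideal.span {1 - e j})) = E j :=
        fun j => SCP.glue_map e hidem' horth E j
      have hmapU : ∀ j, Ug.map (Ideal.Quotient.mk (Ideal.span {1 - e j})) = U j :=
        fun j => SCP.glue_map e hidem' horth U j
      have hmapV : ∀ j, Vg.map (Ideal.Quotient.mk (Ideal.span {1 - e j})) = V j :=
        fun j => SCP.glue_map e hidem' horth V j
      have hglue : ∀ M : Matrix (Fin n) (Fin n) R,
          (∀ i, M.map (Ideal.Quotient.mk (Ideal.span {1 - e i})) = 0) → M = 0 :=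
        fun M hM => SCP.glue_zero_mat e hidem' hsum M hM
      have hidemg : Eg * Eg = Eg := by
        have h2 : Eg * Eg - Eg = 0 := hglue _ fun i => by
          rw [SCP.map_sub_mat, SCP.map_mul_mat, hmapE, hEi, sub_self]
        rwa [sub_eq_zero] at h2
      have hUVg : Ug * Vg = 1 := by
        have h2 : Ug * Vg - 1 = 0 := hglue _ fun i => by
          rw [SCP.map_sub_mat, SCP.map_mul_mat, hmapU, hmapV, hUVi, SCP.map_one_mat, sub_self]
        rwa [sub_eq_zero] at h2
      have hVUg : Vg * Ug = 1 := by
        have h2 : Vg * Ug - 1 = 0 := hglue _ fun i => by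
          rw [SCP.map_sub_mat, SCP.map_mul_mat, hmapU, hmapV, hVUi, SCP.map_one_mat, sub_self]
        rwa [sub_eq_zero] at h2
      have hAg : A = Eg + Ug := by
        have h2 : A - (Eg + Ug) = 0 := hglue _ fun i => by
          rw [SCP.map_sub_mat, SCP.map_add_mat, hmapE, hmapU, ← hAi, sub_self]
        have h3 := sub_eq_zero.mp h2
        exact h3
      have hcommg : Eg * Ug = Ug * Eg := by
        have h2 : Eg * Ug - Ug * Eg = 0 := hglue _ fun i => by
          rw [SCP.map_sub_mat, SCP.map_mul_mat, SCP.map_mul_mat, hmapE, hmapU, hEUi, sub_self]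
        rwa [sub_eq_zero] at h2
      exact ⟨Eg, Ug, hidemg, ⟨⟨Ug, Vg, hUVg, hVUg⟩, rfl⟩, hAg, hcommg⟩
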